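/- Let (Ω, ℱ, P) be a probability space, let p : Ω → [0,1] be measurable, and let Y : Ω → {0,1} be a random variable satisfying E[Y | σ(p)] = p almost surely. Assume 0 < E[p] < 1. Then E[p · 1{Y=1}]/P(Y=1) − E[p · 1{Y=0}]/P(Y=0) = Var(p) / ( E[p](1 − E[p]) ). Equivalently, E[p | Y=1] − E[p | Y=0] = Var(p)/(E[p](1 − E[p])). -/

import Mathlib

open MeasureTheory ProbabilityTheory

/-- Posterior-mean gap for a Bernoulli observation with random success probability:
if `E[Y | σ(p)] = p` a.s., with `Y ∈ {0,1}` and `p ∈ [0,1]`, then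
`E[p | Y = 1] − E[p | Y = 0] = Var(p) / (E[p](1 − E[p]))`. -/
theorem posterior_mean_gap
    {Ω : Type*} [MeasurableSpace Ω] (μ : Measure Ω) [IsProbabilityMeasure μ]
    (p Y : Ω → ℝ) (hp : Measurable p) (hY : Measurable Y)
    (hp01 : ∀ ω, p ω ∈ Set.Icc (0 : ℝ) 1)
    (hY01 : ∀ ω, Y ω = 0 ∨ Y ω = 1)
    (hcond : μ[Y | MeasurableSpace.comap p inferInstance] =ᵐ[μ] p)
    (hpos : 0 < ∫ ω, p ω ∂μ) (hlt : ∫ ω, p ω ∂μ < 1) :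
    (∫ ω in {ω | Y ω = 1}, p ω ∂μ) / (μ {ω | Y ω = 1}).toReal
      - (∫ ω in {ω | Y ω = 0}, p ω ∂μ) / (μ {ω | Y ω = 0}).toReal
    = variance p μ / ((∫ ω, p ω ∂μ) * (1 - ∫ ω, p ω ∂μ)) := by
  have hm : MeasurableSpace.comap p inferInstance ≤ ‹MeasurableSpace Ω› := hp.comap_le
  -- basic bounds
  have hYb : ∀ ω, |Y ω| ≤ 1 := fun ω => by rcases hY01 ω with h | h <;> simp [h]
  have hpb : ∀ ω, |p ω| ≤ 1 := fun ω => abs_le.2 ⟨by linarith [(hp01 ω).1], (hp01 ω).2⟩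
  -- integrability
  have hYint : Integrable Y μ :=
    (integrable_const (1 : ℝ)).mono' hY.aestronglyMeasurable (ae_of_all _ hYb)
  have hpint : Integrable p μ :=
    (integrable_const (1 : ℝ)).mono' hp.aestronglyMeasurable (ae_of_all _ hpb)
  have hpYint : Integrable (p * Y) μ :=
    (integrable_const (1 : ℝ)).mono' (hp.mul hY).aestronglyMeasurable
      (ae_of_all _ fun ω => by
        calc ‖(p * Y) ω‖ = |p ω| * |Y ω| := by simp [Real.norm_eq_abs, abs_mul]
        _ ≤ 1 * 1 := mul_le_mul (hpb ω) (hYb ω) (abs_nonneg _) zero_le_one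
        _ = 1 := by ring)
  have hppint : Integrable (p * p) μ :=
    (integrable_const (1 : ℝ)).mono' (hp.mul hp).aestronglyMeasurable
      (ae_of_all _ fun ω => by
        calc ‖(p * p) ω‖ = |p ω| * |p ω| := by simp [Real.norm_eq_abs, abs_mul]
        _ ≤ 1 * 1 := mul_le_mul (hpb ω) (hpb ω) (abs_nonneg _) zero_le_one
        _ = 1 := by ring)
  -- p is m-strongly measurable
  have hpm : StronglyMeasurable[MeasurableSpace.comap p inferInstance] p :=
    (Measurable.stronglyMeasurable (fun s hs => ⟨s, hs, rfl⟩))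
  -- E[Y] = E[p]
  have hEY : ∫ ω, Y ω ∂μ = ∫ ω, p ω ∂μ := by
    rw [← integral_condExp hm (f := Y)]
    exact integral_congr_ae hcond
  -- E[pY] = E[p²]
  have hEpY : ∫ ω, p ω * Y ω ∂μ = ∫ ω, p ω * p ω ∂μ := by
    have h1 : μ[p * Y | MeasurableSpace.comap p inferInstance] =ᵐ[μ] p * μ[Y | MeasurableSpace.comap p inferInstance] :=
      condExp_mul_of_stronglyMeasurable_left hpm hpYint hYint
    have h2 : μ[p * Y | MeasurableSpace.comap p inferInstance] =ᵐ[μ] p * p := by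
      refine h1.trans ?_
      filter_upwards [hcond] with ω hω
      simp [Pi.mul_apply, hω]
    calc ∫ ω, p ω * Y ω ∂μ = ∫ ω, (p * Y) ω ∂μ := rfl
      _ = ∫ ω, (μ[p * Y | MeasurableSpace.comap p inferInstance]) ω ∂μ := (integral_condExp hm (f := p * Y)).symm
      _ = ∫ ω, p ω * p ω ∂μ := integral_congr_ae h2
  -- measure of sets
  have hms1 : MeasurableSet {ω | Y ω = 1} := hY (measurableSet_singleton 1)
  have hms0 : MeasurableSet {ω | Y ω = 0} := hY (measurableSet_singleton 0)
  have hμ1 : (μ {ω | Y ω = 1}).toReal = ∫ ω, Y ω ∂μ := by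
    rw [← measureReal_def, ← integral_indicator_one hms1]
    refine integral_congr_ae (ae_of_all _ fun ω => ?_)
    rcases hY01 ω with h | h <;> simp [Set.indicator, h]
  have hμ0 : (μ {ω | Y ω = 0}).toReal = ∫ ω, (1 - Y ω) ∂μ := by
    rw [← measureReal_def, ← integral_indicator_one hms0]
    refine integral_congr_ae (ae_of_all _ fun ω => ?_)
    rcases hY01 ω with h | h <;> simp [Set.indicator, h]
  have hμ0' : (μ {ω | Y ω = 0}).toReal = 1 - ∫ ω, p ω ∂μ := by
    rw [hμ0, integral_sub (integrable_const 1) hYint, hEY]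
    simp
  -- set integrals
  have hs1 : ∫ ω in {ω | Y ω = 1}, p ω ∂μ = ∫ ω, p ω * Y ω ∂μ := by
    rw [← integral_indicator hms1]
    refine integral_congr_ae (ae_of_all _ fun ω => ?_)
    rcases hY01 ω with h | h <;> simp [Set.indicator, h]
  have hs0 : ∫ ω in {ω | Y ω = 0}, p ω ∂μ = ∫ ω, (p ω - p ω * Y ω) ∂μ := by
    rw [← integral_indicator hms0]
    refine integral_congr_ae (ae_of_all _ fun ω => ?_)
    rcases hY01 ω with h | h <;> simp [Set.indicator, h]
  have hs0' : ∫ ω in {ω | Y ω = 0}, p ω ∂μ = (∫ ω, p ω ∂μ) - ∫ ω, p ω * p ω ∂μ := by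
    have hpYint' : Integrable (fun ω => p ω * Y ω) μ := hpYint
    rw [hs0, integral_sub hpint hpYint', hEpY]
  -- variance
  have hmem : MemLp p 2 μ :=
    (memLp_top_of_bound hp.aestronglyMeasurable 1 (ae_of_all _ hpb)).mono_exponent le_top
  have hvar : variance p μ = (∫ ω, p ω * p ω ∂μ) - (∫ ω, p ω ∂μ) ^ 2 := by
    rw [variance_eq_sub hmem]
    congr 1
    refine integral_congr_ae (ae_of_all _ fun ω => ?_)
    simp [pow_two]
  -- final algebra
  rw [hs1, hs0', hμ1, hEY, hμ0', hvar, hEpY]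
  set a := ∫ ω, p ω ∂μ
  set b := ∫ ω, p ω * p ω ∂μ
  have ha : a ≠ 0 := ne_of_gt hpos
  have ha1 : 1 - a ≠ 0 := by intro h; linarith [hlt]
  field_simp
  ring
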